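/- Let φ : closure(𝔻³) → closure(𝔻) be continuous, holomorphic on 𝔻³, and C¹ on the closed tridisc, with φ(1,1,1) = 1. Then for each k ∈ {1,2,3}, the partial derivative ∂φ/∂z_k at (1,1,1) is a nonnegative real number. -/

import Mathlib

open Complex Filter Set Metric Topology

set_option maxHeartbeats 1600000 in
/-- Julia–Carathéodory type lemma on the tridisc: the partial derivatives at `e = (1,1,1)`
are nonnegative real numbers. -/
theorem julia_caratheodory_tridisc_nonneg (φ : (Fin 3 → ℂ) → ℂ)
    (hmap : ∀ z : Fin 3 → ℂ, (∀ k, ‖z k‖ ≤ 1) → ‖φ z‖ ≤ 1)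
    (hcont : ContinuousOn φ {z : Fin 3 → ℂ | ∀ k, ‖z k‖ ≤ 1})
    (hhol : DifferentiableOn ℂ φ {z : Fin 3 → ℂ | ∀ k, ‖z k‖ < 1})
    (hC1 : ContDiffOn ℝ 1 φ {z : Fin 3 → ℂ | ∀ k, ‖z k‖ ≤ 1})
    (he : φ (fun _ => 1) = 1) :
    ∀ k : Fin 3, ∃ dk : ℂ,
      HasDerivWithinAt (fun w : ℂ => φ (Function.update (fun _ : Fin 3 => (1:ℂ)) k w)) dk
        {w : ℂ | ‖w‖ ≤ 1} 1 ∧ dk.im = 0 ∧ 0 ≤ dk.re := by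
  intro k
  set e : Fin 3 → ℂ := fun _ => 1 with he_def
  set T : Set (Fin 3 → ℂ) := {z | ∀ k, ‖z k‖ ≤ 1} with hT_def
  set U : Set (Fin 3 → ℂ) := {z | ∀ k, ‖z k‖ < 1} with hU_def
  set S : Set ℂ := {w | ‖w‖ ≤ 1} with hS_def
  have hT : T = closedBall (0 : Fin 3 → ℂ) 1 := by
    ext z
    simp [hT_def, mem_closedBall_zero_iff, pi_norm_le_iff_of_nonneg (zero_le_one)]
  have hU : U = ball (0 : Fin 3 → ℂ) 1 := by
    ext z
    simp [hU_def, mem_ball_zero_iff, pi_norm_lt_iff (zero_lt_one)]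
  have hUopen : IsOpen U := hU ▸ isOpen_ball
  have hUT : U ⊆ T := fun z hz j => le_of_lt (hz j)
  have heT : e ∈ T := fun j => by simp [he_def]
  have hTud : UniqueDiffOn ℝ T := by
    rw [hT]
    exact uniqueDiffOn_convex (convex_closedBall _ _)
      ⟨0, ball_subset_interior_closedBall (mem_ball_self one_pos)⟩
  set L : (Fin 3 → ℂ) → ((Fin 3 → ℂ) →L[ℝ] ℂ) := fun z => fderivWithin ℝ φ T z with hL_def
  have hLcont : ContinuousOn L T := hC1.continuousOn_fderivWithin hTud le_rfl
  -- complex linearity of L on U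
  have key : ∀ z ∈ U, ∀ v, L z (Complex.I • v) = Complex.I • L z v := by
    intro z hz v
    have hd : DifferentiableAt ℂ φ z := (hhol z hz).differentiableAt (hUopen.mem_nhds hz)
    have h1 : L z = fderiv ℝ φ z :=
      fderivWithin_of_mem_nhds (mem_of_superset (hUopen.mem_nhds hz) hUT)
    have h2 : fderiv ℝ φ z = (fderiv ℂ φ z).restrictScalars ℝ :=
      (hd.hasFDerivAt.restrictScalars ℝ).fderiv
    rw [h1, h2]
    simp
  have hclos : closure U = T := by rw [hU, hT]; exact closure_ball 0 one_ne_zero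
  have keyE : ∀ v, L e (Complex.I • v) = Complex.I • L e v := by
    intro v
    have hg : ContinuousOn (fun z => L z (Complex.I • v) - Complex.I • L z v) T :=
      (hLcont.clm_apply continuousOn_const).sub
        ((hLcont.clm_apply continuousOn_const).const_smul Complex.I)
    haveI hNB : (𝓝[U] e).NeBot := mem_closure_iff_nhdsWithin_neBot.mp (hclos ▸ heT)
    have ht1 : Tendsto (fun z => L z (Complex.I • v) - Complex.I • L z v) (𝓝[U] e)
        (𝓝 (L e (Complex.I • v) - Complex.I • L e v)) :=
      (hg.continuousWithinAt heT).mono_left (nhdsWithin_mono _ hUT)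
    have ht2 : Tendsto (fun z => L z (Complex.I • v) - Complex.I • L z v) (𝓝[U] e)
        (𝓝 0) := by
      refine tendsto_const_nhds.congr' ?_
      filter_upwards [self_mem_nhdsWithin] with z hz
      exact (sub_eq_zero.2 (key z hz v)).symm
    exact sub_eq_zero.mp (tendsto_nhds_unique ht1 ht2)
  -- the slice map
  set ι : ℂ → (Fin 3 → ℂ) := fun w => Function.update e k w with hι_def
  set ψ : ℂ → ℂ := fun w => φ (ι w) with hψ_def
  set J : ℂ →L[ℝ] (Fin 3 → ℂ) :=
    LinearMap.toContinuousLinearMap (LinearMap.single ℝ (fun _ : Fin 3 => ℂ) k) with hJ_def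
  have hJapp : ∀ w : ℂ, J w = Pi.single k w := fun w => rfl
  have hιaff : ι = fun w => (e - Pi.single k (1:ℂ)) + J w := by
    funext w; funext j
    by_cases h : j = k
    · subst h; simp [hι_def, hJapp, he_def]
    · simp [hι_def, hJapp, Function.update_apply, Pi.single_apply, h, he_def]
  have hιd : HasFDerivAt ι J 1 := by
    rw [hιaff]
    exact J.hasFDerivAt.const_add _
  have hι1 : ι 1 = e := by
    funext j; by_cases h : j = k <;> simp [hι_def, Function.update_apply, h, he_def]
  have hmaps : MapsTo ι S T := by
    intro w hw j
    by_cases h : j = k <;> simp [hι_def, Function.update_apply, h, he_def]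
    · exact hw
  have hφd : HasFDerivWithinAt φ (L e) T e :=
    ((hC1.differentiableOn one_ne_zero) e heT).hasFDerivWithinAt
  have hψd : HasFDerivWithinAt ψ ((L e).comp J) S 1 := by
    have hφd' : HasFDerivWithinAt φ (L e) T (ι 1) := hι1 ▸ hφd
    exact hφd'.comp (1:ℂ) hιd.hasFDerivWithinAt hmaps
  set dk : ℂ := L e (Pi.single k 1) with hdk_def
  have hder : HasDerivWithinAt ψ dk S 1 := by
    apply HasFDerivWithinAt.of_restrictScalars ℝ hψd
    ext w
    have hw : (Pi.single k w : Fin 3 → ℂ) = w.re • (Pi.single k 1 : Fin 3 → ℂ) +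
        w.im • (Complex.I • (Pi.single k 1 : Fin 3 → ℂ)) := by
      funext j
      by_cases h : j = k
      · subst h
        simp only [Pi.single_apply, if_pos rfl, Pi.add_apply, Pi.smul_apply,
          Complex.real_smul, smul_eq_mul, if_true, mul_one]
        exact (Complex.re_add_im w).symm
      · simp [Pi.single_apply, h]
    simp only [ContinuousLinearMap.coe_restrictScalars', ContinuousLinearMap.coe_comp',
      Function.comp_apply, ContinuousLinearMap.smulRight_apply, ContinuousLinearMap.one_apply]
    rw [hJapp, hw, map_add, map_smul, map_smul, keyE]
    simp only [← hdk_def, Complex.real_smul, smul_eq_mul, ContinuousLinearMap.toSpanSingleton_apply]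
    conv_lhs => rw [← Complex.re_add_im w]
    ring
  -- basic properties of ψ
  have hψS : ∀ w ∈ S, ‖ψ w‖ ≤ 1 := by
    intro w hw
    exact hmap _ (hmaps hw)
  have hψ1 : ψ 1 = 1 := by rw [hψ_def]; simp only [hι1]; exact he
  have hre_le : ∀ w ∈ S, (ψ w).re ≤ 1 :=
    fun w hw => le_trans (Complex.re_le_norm _) (hψS w hw)
  have hslope : Tendsto (slope ψ 1) (𝓝[S \ {1}] 1) (𝓝 dk) :=
    hasDerivWithinAt_iff_tendsto_slope.mp hder
  -- real part nonneg
  have hre : 0 ≤ dk.re := by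
    have hmem : ∀ t ∈ Ioo (0:ℝ) 1, ((t:ℂ)) ∈ S \ {1} := by
      intro t ht
      constructor
      · show ‖_‖ ≤ 1
        rw [Complex.norm_real, Real.norm_eq_abs, abs_of_pos ht.1]
        exact le_of_lt ht.2
      · simp only [mem_singleton_iff]
        intro h
        exact absurd (Complex.ofReal_injective (by simpa using h)) (ne_of_lt ht.2)
    have htend : Tendsto (fun t : ℝ => (t:ℂ)) (𝓝[Ioo (0:ℝ) 1] 1) (𝓝[S \ {1}] 1) := by
      apply tendsto_nhdsWithin_of_tendsto_nhds_of_eventually_within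
      · exact (Complex.continuous_ofReal.tendsto 1).mono_left nhdsWithin_le_nhds
      · filter_upwards [self_mem_nhdsWithin] with t ht using hmem t ht
    haveI hNB : (𝓝[Ioo (0:ℝ) 1] (1:ℝ)).NeBot := by
      apply mem_closure_iff_nhdsWithin_neBot.mp
      rw [closure_Ioo (by norm_num : (0:ℝ) ≠ 1)]
      exact right_mem_Icc.2 zero_le_one
    have hlim : Tendsto (fun t : ℝ => (slope ψ 1 (t:ℂ)).re) (𝓝[Ioo (0:ℝ) 1] 1)
        (𝓝 dk.re) := (Complex.continuous_re.tendsto dk).comp (hslope.comp htend)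
    refine ge_of_tendsto hlim ?_
    filter_upwards [self_mem_nhdsWithin] with t ht
    have h1 : (ψ (t:ℂ)).re ≤ 1 := hre_le _ (hmem t ht).1
    rw [slope_def_field, hψ1]
    have hd : ((t:ℂ) - 1) = ((t - 1 : ℝ) : ℂ) := by push_cast; ring
    rw [hd, Complex.div_ofReal_re]
    rw [div_nonneg_iff]
    right
    constructor
    · simpa using sub_nonpos.2 h1
    · linarith [ht.2]
  -- imaginary part zero
  have hIm : dk.im = 0 := by
    set m : ℝ → ℂ := fun θ => Complex.exp (θ * Complex.I) with hm_def
    set Q : Set ℝ := Ioo (-1 : ℝ) 1 \ {0} with hQ_def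
    have hsin : ∀ θ ∈ Q, Real.sin θ ≠ 0 := by
      intro θ hθ
      rcases lt_or_gt_of_ne hθ.2 with h | h
      · have : Real.sin (-θ) > 0 :=
          Real.sin_pos_of_pos_of_lt_pi (by linarith) (by linarith [hθ.1.1, Real.pi_gt_three])
        rw [Real.sin_neg] at this; linarith
      · exact ne_of_gt (Real.sin_pos_of_pos_of_lt_pi h (by linarith [hθ.1.2, Real.pi_gt_three]))
    have hmS : ∀ θ ∈ Q, m θ ∈ S \ {1} := by
      intro θ hθ
      constructor
      · show ‖_‖ ≤ 1
        rw [Complex.norm_exp_ofReal_mul_I]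
      · simp only [mem_singleton_iff]
        intro h
        have : (m θ).im = 0 := by rw [h]; simp
        rw [hm_def] at this
        simp only [Complex.exp_ofReal_mul_I_im] at this
        exact hsin θ hθ this
    have htend : Tendsto m (𝓝[Q] 0) (𝓝[S \ {1}] 1) := by
      apply tendsto_nhdsWithin_of_tendsto_nhds_of_eventually_within
      · have : Continuous m := Complex.continuous_exp.comp (Complex.continuous_ofReal.mul continuous_const)
        have h0 : m 0 = 1 := by simp [hm_def]
        exact h0 ▸ (this.tendsto 0).mono_left nhdsWithin_le_nhds
      · filter_upwards [self_mem_nhdsWithin] with θ hθ using hmS θ hθ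
    have hA : Tendsto (fun θ => slope ψ 1 (m θ)) (𝓝[Q] 0) (𝓝 dk) := hslope.comp htend
    have hm' : HasDerivAt m Complex.I 0 := by
      have h0 : HasDerivAt (fun θ : ℝ => (θ : ℂ) * Complex.I) Complex.I 0 := by
        simpa using (Complex.ofRealCLM.hasDerivAt (x := (0:ℝ))).mul_const Complex.I
      simpa using h0.cexp
    have hB : Tendsto (fun θ : ℝ => (θ:ℝ)⁻¹ • (m θ - 1)) (𝓝[Q] 0) (𝓝 Complex.I) := by
      have := hasDerivAt_iff_tendsto_slope.mp hm'
      have hQ0 : Q ⊆ {(0:ℝ)}ᶜ := fun θ hθ => hθ.2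
      have h2 := this.mono_left (nhdsWithin_mono _ hQ0)
      refine h2.congr (fun θ => ?_)
      rw [slope_def_module]
      simp [hm_def]
    have hC : Tendsto (fun θ : ℝ => ((slope ψ 1 (m θ)) * ((θ:ℝ)⁻¹ • (m θ - 1))).re)
        (𝓝[Q] 0) (𝓝 ((dk * Complex.I).re)) :=
      (Complex.continuous_re.tendsto _).comp (hA.mul hB)
    have hval : ∀ θ ∈ Q, ((slope ψ 1 (m θ)) * ((θ:ℝ)⁻¹ • (m θ - 1))).re
        = (ψ (m θ) - 1).re * θ⁻¹ := by
      intro θ hθ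
      have h1 : m θ ≠ 1 := by
        intro h; exact (hmS θ hθ).2 (by simpa using h)
      have : (slope ψ 1 (m θ)) * ((θ:ℝ)⁻¹ • (m θ - 1))
          = (θ:ℝ)⁻¹ • (ψ (m θ) - 1) := by
        rw [slope_def_field, hψ1, mul_smul_comm, div_mul_cancel₀]
        exact sub_ne_zero.2 h1
      rw [this, Complex.smul_re, smul_eq_mul, mul_comm]
    haveI hNBp : (𝓝[Ioo (0:ℝ) 1] (0:ℝ)).NeBot := by
      apply mem_closure_iff_nhdsWithin_neBot.mp
      rw [closure_Ioo (by norm_num : (0:ℝ) ≠ 1)]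
      exact left_mem_Icc.2 zero_le_one
    haveI hNBn : (𝓝[Ioo (-1:ℝ) 0] (0:ℝ)).NeBot := by
      apply mem_closure_iff_nhdsWithin_neBot.mp
      rw [closure_Ioo (by norm_num : (-1:ℝ) ≠ 0)]
      exact right_mem_Icc.2 (by norm_num)
    have hsubp : Ioo (0:ℝ) 1 ⊆ Q := by
      intro θ hθ; exact ⟨⟨by linarith [hθ.1], hθ.2⟩, ne_of_gt hθ.1⟩
    have hsubn : Ioo (-1:ℝ) 0 ⊆ Q := by
      intro θ hθ; exact ⟨⟨hθ.1, by linarith [hθ.2]⟩, ne_of_lt hθ.2⟩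
    have h1 : (dk * Complex.I).re ≤ 0 := by
      refine le_of_tendsto (hC.mono_left (nhdsWithin_mono _ hsubp)) ?_
      filter_upwards [self_mem_nhdsWithin] with θ hθ
      rw [hval θ (hsubp hθ)]
      have : (ψ (m θ)).re ≤ 1 := hre_le _ (hmS θ (hsubp hθ)).1
      have h2 : (ψ (m θ) - 1).re ≤ 0 := by simp [Complex.sub_re]; linarith
      exact mul_nonpos_of_nonpos_of_nonneg h2 (le_of_lt (inv_pos.2 hθ.1))
    have h2 : 0 ≤ (dk * Complex.I).re := by
      refine ge_of_tendsto (hC.mono_left (nhdsWithin_mono _ hsubn)) ?_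
      filter_upwards [self_mem_nhdsWithin] with θ hθ
      rw [hval θ (hsubn hθ)]
      have : (ψ (m θ)).re ≤ 1 := hre_le _ (hmS θ (hsubn hθ)).1
      have h3 : (ψ (m θ) - 1).re ≤ 0 := by simp [Complex.sub_re]; linarith
      have h4 : θ⁻¹ ≤ 0 := inv_nonpos.2 (le_of_lt hθ.2)
      nlinarith
    have hz : (dk * Complex.I).re = 0 := le_antisymm h1 h2
    simpa [Complex.mul_re] using hz
  exact ⟨dk, hder, hIm, hre⟩
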